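/- Let I¹, I², I³ ⊂ {1,…,n} be pairwise disjoint, and let r̲_i, r̄_i : l∞^{n−1} → ℝ be 1-Lipschitz maps for i ∈ I¹, r̲_i : l∞^{n−1} → ℝ be 1-Lipschitz maps for i ∈ I², and r̄_i : l∞^{n−1} → ℝ be 1-Lipschitz maps for i ∈ I³. Define Q¹ := { x ∈ ℝ^n : for all i ∈ I¹, r̲_i(π̂_i(x)) ≤ x_i ≤ r̄_i(π̂_i(x)) }, Q² := { x ∈ ℝ^n : for all i ∈ I², r̲_i(π̂_i(x)) ≤ x_i }, Q³ := { x ∈ ℝ^n : for all i ∈ I³, x_i ≤ r̄_i(π̂_i(x)) }. If Q := Q¹ ∩ Q² ∩ Q³ ≠ ∅ and r̲_i ≤ r̄_i pointwise for every i ∈ I¹, then Q ⊂ l∞^n is injective. -/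

import Mathlib

open Set Metric

/-- A metric space `X` is *injective* if for all metric spaces `A`, `B`, every isometric
embedding `i : A → B` and every `1`-Lipschitz map `f : A → X`, there is a `1`-Lipschitz
map `g : B → X` with `g ∘ i = f`. -/
def IsInjectiveMetricSpace (X : Type) [MetricSpace X] : Prop :=
  ∀ (A B : Type) [MetricSpace A] [MetricSpace B], ∀ (i : A → B) (f : A → X),
    Isometry i → LipschitzWith 1 f →
      ∃ g : B → X, LipschitzWith 1 g ∧ ∀ a, g (i a) = f a

/-- A subset of `l∞ⁿ = (Fin n → ℝ)` (whose product metric is the sup-metric) is injective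
if it is an injective metric space with the induced metric. -/
def IsInjectiveSubset {n : ℕ} (S : Set (Fin n → ℝ)) : Prop :=
  IsInjectiveMetricSpace S

/-- The `1`-Lipschitz map `π̂ᵢ : l∞^{n+1} → l∞ⁿ` deleting the `i`-th coordinate. -/
def deleteCoord {n : ℕ} (i : Fin (n + 1)) (x : Fin (n + 1) → ℝ) : Fin n → ℝ :=
  fun j => x (i.succAbove j)

lemma injective_of_ball_property (X : Type) [MetricSpace X] (x0 : X)
    (hball : ∀ (ι : Type) (p : ι → X) (r : ι → ℝ), Nonempty ι →
      (∀ α β, dist (p α) (p β) ≤ r α + r β) → ∃ x : X, ∀ α, dist x (p α) ≤ r α) :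
    IsInjectiveMetricSpace X := by
  intro A B _ _ i f hi hf
  by_cases hA : Nonempty A
  · set G0 : Set (B × X) := Set.range (fun a => (i a, f a)) with hG0
    set S : Set (Set (B × X)) :=
      {F | G0 ⊆ F ∧ ∀ p ∈ F, ∀ q ∈ F, dist p.2 q.2 ≤ dist p.1 q.1} with hS
    have hG0S : G0 ∈ S := by
      refine ⟨subset_rfl, ?_⟩
      rintro p ⟨a, rfl⟩ q ⟨a', rfl⟩
      calc dist (f a) (f a') ≤ dist a a' := by simpa using hf.dist_le_mul a a'
        _ = dist (i a) (i a') := (hi.dist_eq a a').symm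
    have hzorn : ∀ c ⊆ S, IsChain (· ⊆ ·) c → c.Nonempty →
        ∃ ub ∈ S, ∀ s ∈ c, s ⊆ ub := by
      intro c hcS hchain hcne
      refine ⟨⋃₀ c, ⟨?_, ?_⟩, fun s hs => subset_sUnion_of_mem hs⟩
      · obtain ⟨F, hF⟩ := hcne
        exact (hcS hF).1.trans (subset_sUnion_of_mem hF)
      · rintro p ⟨F1, hF1, hp⟩ q ⟨F2, hF2, hq⟩
        rcases hchain.total hF1 hF2 with h | h
        · exact (hcS hF2).2 _ (h hp) _ hq
        · exact (hcS hF1).2 _ hp _ (h hq)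
    obtain ⟨M, hG0M, hMmax⟩ := zorn_subset_nonempty S hzorn G0 hG0S
    · have hMS : M ∈ S := hMmax.prop
      have claim : ∀ b : B, ∃ x : X, (b, x) ∈ M := by
        intro b
        by_contra hbx
        push_neg at hbx
        obtain ⟨x, hx⟩ := hball (↥M) (fun m => (m : B × X).2)
          (fun m => dist b (m : B × X).1)
          (hA.elim fun a => ⟨⟨(i a, f a), hG0M ⟨a, rfl⟩⟩⟩)
          (fun α β => by
            calc dist (α : B × X).2 (β : B × X).2 ≤ dist (α : B × X).1 (β : B × X).1 :=
                  hMS.2 _ α.2 _ β.2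
              _ ≤ dist (α : B × X).1 b + dist b (β : B × X).1 := dist_triangle _ _ _
              _ = dist b (α : B × X).1 + dist b (β : B × X).1 := by
                  rw [dist_comm (α : B × X).1 b])
        have hM'S : insert (b, x) M ∈ S := by
          refine ⟨hG0M.trans (subset_insert _ _), ?_⟩
          intro p hp q hq
          rcases mem_insert_iff.1 hp with rfl | hp' <;> rcases mem_insert_iff.1 hq with rfl | hq'
          · simp
          · simpa [dist_comm] using hx ⟨q, hq'⟩
          · simpa [dist_comm] using hx ⟨p, hp'⟩
          · exact hMS.2 _ hp' _ hq'
        have : (b, x) ∈ M := hMmax.2 hM'S (subset_insert _ _) (mem_insert _ _)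
        exact hbx x this
      refine ⟨fun b => (claim b).choose, ?_, ?_⟩
      · refine LipschitzWith.of_dist_le_mul fun b b' => ?_
        simpa using hMS.2 _ (claim b).choose_spec _ (claim b').choose_spec
      · intro a
        have h1 : (i a, (claim (i a)).choose) ∈ M := (claim (i a)).choose_spec
        have h2 : (i a, f a) ∈ M := hG0M ⟨a, rfl⟩
        have := hMS.2 _ h1 _ h2
        simpa [dist_le_zero] using this
  · exact ⟨fun _ => x0, LipschitzWith.const' x0, fun a => (hA ⟨a⟩).elim⟩

lemma abs_min_sub_min_right (a b c : ℝ) : |min a c - min b c| ≤ |a - b| := by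
  simp only [min_def]
  split_ifs <;>
    (try simp) <;>
    (rw [abs_le]; constructor <;>
      linarith [le_abs_self (a - b), neg_abs_le (a - b)])

lemma abs_clamp_sub_clamp (lj uj a b : ℝ) :
    |max lj (min a uj) - max lj (min b uj)| ≤ |a - b| := by
  rw [max_comm lj, max_comm lj]
  exact (abs_max_sub_max_le_abs _ _ _).trans (abs_min_sub_min_right a b uj)

lemma lipschitz_deleteCoord {n : ℕ} (i : Fin (n + 1)) :
    LipschitzWith 1 (deleteCoord (n := n) i) := by
  refine LipschitzWith.of_dist_le_mul fun x y => ?_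
  simp only [NNReal.coe_one, one_mul]
  exact (dist_pi_le_iff dist_nonneg).2 fun j => dist_le_pi_dist x y _

lemma dist_deleteCoord {n : ℕ} (i : Fin (n + 1)) (x y : Fin (n + 1) → ℝ) :
    dist (deleteCoord i x) (deleteCoord i y) ≤ dist x y := by
  simpa using (lipschitz_deleteCoord i).dist_le_mul x y

open Classical in
/-- The clamping map. -/
noncomputable def clampMap {n : ℕ} (I1 I2 I3 : Set (Fin (n + 1)))
    (rlo rhi : Fin (n + 1) → (Fin n → ℝ) → ℝ) (x : Fin (n + 1) → ℝ) : Fin (n + 1) → ℝ :=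
  fun i =>
    if i ∈ I1 then max (rlo i (deleteCoord i x)) (min (x i) (rhi i (deleteCoord i x)))
    else if i ∈ I2 then max (rlo i (deleteCoord i x)) (x i)
    else if i ∈ I3 then min (x i) (rhi i (deleteCoord i x))
    else x i

lemma lipschitz_clampMap_coord {n : ℕ} (I1 I2 I3 : Set (Fin (n + 1)))
    (rlo rhi : Fin (n + 1) → (Fin n → ℝ) → ℝ)
    (hlo1 : ∀ i ∈ I1, LipschitzWith 1 (rlo i)) (hhi1 : ∀ i ∈ I1, LipschitzWith 1 (rhi i))
    (hlo2 : ∀ i ∈ I2, LipschitzWith 1 (rlo i)) (hhi3 : ∀ i ∈ I3, LipschitzWith 1 (rhi i))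
    (i : Fin (n + 1)) : LipschitzWith 1 (fun x => clampMap I1 I2 I3 rlo rhi x i) := by
  classical
  have hev : LipschitzWith 1 (fun x : Fin (n + 1) → ℝ => x i) :=
    LipschitzWith.of_dist_le_mul fun x y => by
      simp only [NNReal.coe_one, one_mul]; exact dist_le_pi_dist x y i
  have hmax : ∀ {f g : (Fin (n + 1) → ℝ) → ℝ}, LipschitzWith 1 f → LipschitzWith 1 g →
      LipschitzWith 1 (fun x => max (f x) (g x)) := fun hf hg => by
    have := hf.max hg; rwa [max_self] at this
  have hmin : ∀ {f g : (Fin (n + 1) → ℝ) → ℝ}, LipschitzWith 1 f → LipschitzWith 1 g →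
      LipschitzWith 1 (fun x => min (f x) (g x)) := fun hf hg => by
    have := hf.min hg; rwa [max_self] at this
  unfold clampMap
  by_cases h1 : i ∈ I1
  · simp only [h1, if_true]
    exact hmax (by simpa [Function.comp_def] using (hlo1 i h1).comp (lipschitz_deleteCoord i))
      (hmin hev (by simpa [Function.comp_def] using (hhi1 i h1).comp (lipschitz_deleteCoord i)))
  · by_cases h2 : i ∈ I2
    · simp only [h1, h2, if_false, if_true]
      exact hmax (by simpa [Function.comp_def] using (hlo2 i h2).comp (lipschitz_deleteCoord i)) hev
    · by_cases h3 : i ∈ I3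
      · simp only [h1, h2, h3, if_false, if_true]
        exact hmin hev (by simpa [Function.comp_def] using (hhi3 i h3).comp (lipschitz_deleteCoord i))
      · simp only [h1, h2, h3, if_false]
        exact hev

lemma box_meets_Q {n : ℕ} (I1 I2 I3 : Set (Fin (n + 1)))
    (h12 : I1 ∩ I2 = ∅) (h13 : I1 ∩ I3 = ∅) (h23 : I2 ∩ I3 = ∅)
    (rlo rhi : Fin (n + 1) → (Fin n → ℝ) → ℝ)
    (hlo1 : ∀ i ∈ I1, LipschitzWith 1 (rlo i)) (hhi1 : ∀ i ∈ I1, LipschitzWith 1 (rhi i))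
    (hlo2 : ∀ i ∈ I2, LipschitzWith 1 (rlo i)) (hhi3 : ∀ i ∈ I3, LipschitzWith 1 (rhi i))
    (hle : ∀ i ∈ I1, ∀ y, rlo i y ≤ rhi i y)
    (ι : Type) (hι : Nonempty ι) (q : ι → Fin (n + 1) → ℝ)
    (hq1 : ∀ α, ∀ i ∈ I1, rlo i (deleteCoord i (q α)) ≤ q α i ∧ q α i ≤ rhi i (deleteCoord i (q α)))
    (hq2 : ∀ α, ∀ i ∈ I2, rlo i (deleteCoord i (q α)) ≤ q α i)
    (hq3 : ∀ α, ∀ i ∈ I3, q α i ≤ rhi i (deleteCoord i (q α)))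
    (r : ι → ℝ) (compat : ∀ α β, dist (q α) (q β) ≤ r α + r β) :
    ∃ x : Fin (n + 1) → ℝ,
      (∀ i ∈ I1, rlo i (deleteCoord i x) ≤ x i ∧ x i ≤ rhi i (deleteCoord i x)) ∧
      (∀ i ∈ I2, rlo i (deleteCoord i x) ≤ x i) ∧
      (∀ i ∈ I3, x i ≤ rhi i (deleteCoord i x)) ∧
      (∀ α, dist x (q α) ≤ r α) := by
  classical
  haveI := hι
  have hr : ∀ α, 0 ≤ r α := fun α => by
    have h := compat α α; rw [dist_self] at h; linarith
  have key : ∀ α β j, q α j - r α ≤ q β j + r β := by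
    intro α β j
    have h := (dist_le_pi_dist (q α) (q β) j).trans (compat α β)
    rw [Real.dist_eq] at h
    have := (abs_le.1 h).2
    linarith
  set L : Fin (n + 1) → ℝ := fun j => ⨆ α, (q α j - r α) with hLdef
  set U : Fin (n + 1) → ℝ := fun j => ⨅ α, (q α j + r α) with hUdef
  have hBddA : ∀ j, BddAbove (Set.range fun α => q α j - r α) := fun j =>
    ⟨q (Classical.arbitrary ι) j + r (Classical.arbitrary ι), by
      rintro _ ⟨α, rfl⟩; exact key α _ j⟩
  have hBddB : ∀ j, BddBelow (Set.range fun α => q α j + r α) := fun j =>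
    ⟨q (Classical.arbitrary ι) j - r (Classical.arbitrary ι), by
      rintro _ ⟨α, rfl⟩; exact key _ α j⟩
  have hLU : ∀ j, L j ≤ U j := fun j =>
    ciSup_le fun α => le_ciInf fun β => key α β j
  have hLq : ∀ α j, q α j - r α ≤ L j := fun α j => le_ciSup (hBddA j) α
  have hUq : ∀ α j, U j ≤ q α j + r α := fun α j => ciInf_le (hBddB j) α
  set Φ := clampMap I1 I2 I3 rlo rhi with hΦdef
  set Ψ : (Fin (n + 1) → ℝ) → (Fin (n + 1) → ℝ) :=
    fun x j => max (L j) (min (Φ x j) (U j)) with hΨdef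
  have hΨL : ∀ x j, L j ≤ Ψ x j := fun x j => le_max_left _ _
  have hΨU : ∀ x j, Ψ x j ≤ U j := fun x j => max_le (hLU j) (min_le_right _ _)
  have hΦcoord : ∀ i, LipschitzWith 1 (fun x => Φ x i) :=
    lipschitz_clampMap_coord I1 I2 I3 rlo rhi hlo1 hhi1 hlo2 hhi3
  have hΨcoord : ∀ j x y, dist (Ψ x j) (Ψ y j) ≤ dist x y := by
    intro j x y
    have h1 : dist (Φ x j) (Φ y j) ≤ dist x y := by
      simpa using (hΦcoord j).dist_le_mul x y
    rw [Real.dist_eq] at h1 ⊢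
    exact (abs_clamp_sub_clamp (L j) (U j) (Φ x j) (Φ y j)).trans h1
  have hΨlip : LipschitzWith 1 Ψ := by
    refine LipschitzWith.of_dist_le_mul fun x y => ?_
    simp only [NNReal.coe_one, one_mul]
    exact (dist_pi_le_iff dist_nonneg).2 fun j => hΨcoord j x y
  -- the compact box
  set B : Set (Fin (n + 1) → ℝ) := Set.pi Set.univ fun j => Icc (L j) (U j) with hBdef
  have hBc : IsCompact B := isCompact_univ_pi fun j => isCompact_Icc
  have hBne : B.Nonempty := ⟨L, fun j _ => ⟨le_rfl, hLU j⟩⟩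
  have hΨmem : ∀ x, Ψ x ∈ B := fun x j _ => ⟨hΨL x j, hΨU x j⟩
  -- fixed points of the contracted maps
  set C : ℝ := dist L U with hCdef
  have hC : 0 ≤ C := dist_nonneg
  have hfix : ∀ t : ℝ, 0 < t → t ≤ 1 →
      ∃ y, y ∈ B ∧ dist y (Ψ y) ≤ t * C := by
    intro t ht ht1
    set Ψt : (Fin (n + 1) → ℝ) → (Fin (n + 1) → ℝ) :=
      fun x j => t * L j + (1 - t) * Ψ x j with hΨtdef
    have hcontr : ContractingWith (Real.toNNReal (1 - t)) Ψt := by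
      constructor
      · rw [← NNReal.coe_lt_coe, Real.coe_toNNReal _ (by linarith)]
        norm_num; exact ht
      · refine LipschitzWith.of_dist_le_mul fun x y => ?_
        rw [Real.coe_toNNReal _ (by linarith)]
        refine (dist_pi_le_iff (mul_nonneg (by linarith) dist_nonneg)).2 fun j => ?_
        have := hΨcoord j x y
        rw [Real.dist_eq] at this ⊢
        have h2 : t * L j + (1 - t) * Ψ x j - (t * L j + (1 - t) * Ψ y j)
            = (1 - t) * (Ψ x j - Ψ y j) := by ring
        rw [h2, abs_mul, abs_of_nonneg (by linarith : (0:ℝ) ≤ 1 - t)]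
        exact mul_le_mul_of_nonneg_left this (by linarith)
    obtain ⟨y, hy, -⟩ := hcontr.exists_fixedPoint L (edist_ne_top _ _)
    have hyeq : ∀ j, y j = t * L j + (1 - t) * Ψ y j := fun j =>
      (congrFun hy.symm j : _)
    refine ⟨y, fun j _ => ?_, ?_⟩
    · have h1 := hΨL y j
      have h2 := hΨU y j
      have h3 := hLU j
      constructor <;> rw [hyeq j] <;> nlinarith
    · refine (dist_pi_le_iff (by positivity)).2 fun j => ?_
      rw [hyeq j, Real.dist_eq]
      have h4 : t * L j + (1 - t) * Ψ y j - Ψ y j = t * (L j - Ψ y j) := by ring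
      rw [h4, abs_mul, abs_of_pos ht]
      refine mul_le_mul_of_nonneg_left ?_ (le_of_lt ht)
      have h5 : |L j - Ψ y j| ≤ |L j - U j| := by
        rw [abs_of_nonpos (by linarith [hΨL y j]), abs_of_nonpos (by linarith [hLU j])]
        linarith [hΨU y j]
      exact h5.trans (by rw [hCdef, ← Real.dist_eq]; exact dist_le_pi_dist L U j)
  -- minimize dist x (Ψ x) on B
  obtain ⟨x, hxB, hxmin⟩ := hBc.exists_isMinOn hBne
    (Continuous.continuousOn (Continuous.dist continuous_id hΨlip.continuous))
  have hx0 : dist x (Ψ x) = 0 := by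
    by_contra h
    have hd : 0 < dist x (Ψ x) := lt_of_le_of_ne dist_nonneg (Ne.symm h)
    set t : ℝ := min 1 (dist x (Ψ x) / (2 * (C + 1))) with htdef
    have ht : 0 < t := lt_min one_pos (by positivity)
    obtain ⟨y, hyB, hyd⟩ := hfix t ht (min_le_left _ _)
    have := hxmin hyB
    simp only at this
    have h6 : t * C ≤ (dist x (Ψ x) / (2 * (C + 1))) * C :=
      mul_le_mul_of_nonneg_right (min_le_right _ _) hC
    have h7 : (dist x (Ψ x) / (2 * (C + 1))) * C < dist x (Ψ x) := by
      rw [div_mul_eq_mul_div, div_lt_iff₀ (by positivity)]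
      nlinarith
    have : dist x (Ψ x) ≤ t * C := le_trans this hyd
    linarith
  have hxfix : Ψ x = x := by
    have := dist_eq_zero.1 hx0
    exact this.symm
  have hxcoord : ∀ j, x j = max (L j) (min (Φ x j) (U j)) := fun j =>
    (congrFun hxfix j).symm
  have hxmemB : ∀ j, L j ≤ x j ∧ x j ≤ U j := fun j =>
    ⟨(hxB j (mem_univ j)).1, (hxB j (mem_univ j)).2⟩
  have hxq : ∀ α, dist x (q α) ≤ r α := by
    intro α
    refine (dist_pi_le_iff (hr α)).2 fun j => ?_
    rw [Real.dist_eq, abs_le]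
    have h1 := (hxmemB j).1
    have h2 := (hxmemB j).2
    have h3 := hLq α j
    have h4 := hUq α j
    constructor <;> linarith
  -- the two contradiction engines
  have contraLo : ∀ i, LipschitzWith 1 (rlo i) →
      (∀ α, rlo i (deleteCoord i (q α)) ≤ q α i) →
      U i < rlo i (deleteCoord i x) → False := by
    intro i hlip hqlo hUlt
    obtain ⟨α, hα⟩ := exists_lt_of_ciInf_lt hUlt
    have h1 : dist (rlo i (deleteCoord i (q α))) (rlo i (deleteCoord i x)) ≤ r α := by
      calc dist (rlo i (deleteCoord i (q α))) (rlo i (deleteCoord i x))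
          ≤ dist (deleteCoord i (q α)) (deleteCoord i x) := by
            simpa using hlip.dist_le_mul _ _
        _ ≤ dist (q α) x := dist_deleteCoord i _ _
        _ = dist x (q α) := dist_comm _ _
        _ ≤ r α := hxq α
    rw [Real.dist_eq] at h1
    have h2 := (abs_le.1 h1).2
    have h3 := hqlo α
    -- q α i + r α < rlo i (del x) but rlo i (del (q α)) ≥ rlo i (del x) - r α
    have h4 := (abs_le.1 h1).1
    linarith
  have contraHi : ∀ i, LipschitzWith 1 (rhi i) →
      (∀ α, q α i ≤ rhi i (deleteCoord i (q α))) →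
      rhi i (deleteCoord i x) < L i → False := by
    intro i hlip hqhi hLgt
    obtain ⟨α, hα⟩ := exists_lt_of_lt_ciSup hLgt
    have h1 : dist (rhi i (deleteCoord i (q α))) (rhi i (deleteCoord i x)) ≤ r α := by
      calc dist (rhi i (deleteCoord i (q α))) (rhi i (deleteCoord i x))
          ≤ dist (deleteCoord i (q α)) (deleteCoord i x) := by
            simpa using hlip.dist_le_mul _ _
        _ ≤ dist (q α) x := dist_deleteCoord i _ _
        _ = dist x (q α) := dist_comm _ _
        _ ≤ r α := hxq α
    rw [Real.dist_eq] at h1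
    have h2 := (abs_le.1 h1).2
    have h3 := hqhi α
    linarith
  -- structure of the fixed point equation
  have caseA : ∀ i, x i < Φ x i → x i = U i := by
    intro i hlt
    rcases le_or_gt (Φ x i) (U i) with h | h
    · exfalso
      have := hxcoord i
      rw [min_eq_left h] at this
      have : Φ x i ≤ x i := by rw [this]; exact le_max_right _ _
      linarith
    · have := hxcoord i
      rw [min_eq_right h.le, max_eq_right (hLU i)] at this
      exact this
  have caseB : ∀ i, Φ x i < x i → x i = L i := by
    intro i hlt
    have h1 : min (Φ x i) (U i) ≤ Φ x i := min_le_left _ _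
    have := hxcoord i
    rcases max_cases (L i) (min (Φ x i) (U i)) with ⟨he, -⟩ | ⟨he, -⟩
    · rw [he] at this; exact this
    · exfalso; rw [he] at this; linarith
  refine ⟨x, ?_, ?_, ?_, hxq⟩
  · -- I1
    intro i hi1
    set lo := rlo i (deleteCoord i x) with hlo
    set hi' := rhi i (deleteCoord i x) with hhi'
    have hlohi : lo ≤ hi' := hle i hi1 _
    have hΦi : Φ x i = max lo (min (x i) hi') := by
      simp only [hΦdef, clampMap, hi1, if_true, hlo, hhi']
    rcases lt_trichotomy (Φ x i) (x i) with hlt | heq | hgt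
    · exfalso
      have hxL := caseB i hlt
      have hmin : min (x i) hi' = hi' := by
        rcases min_cases (x i) hi' with ⟨he, -⟩ | ⟨he, hle'⟩
        · exfalso
          have : Φ x i ≥ x i := by rw [hΦi, he]; exact le_max_right _ _
          linarith
        · exact he
      have hΦeq : Φ x i = hi' := by rw [hΦi, hmin, max_eq_right hlohi]
      exact contraHi i (hhi1 i hi1) (fun α => (hq1 α i hi1).2)
        (by show hi' < L i; rw [← hxL, ← hΦeq]; exact hlt)
    · constructor
      · rw [← heq, hΦi]; exact le_max_left _ _
      · by_contra hgt'
        push_neg at hgt'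
        have hmin : min (x i) hi' = hi' := min_eq_right hgt'.le
        have : Φ x i = hi' := by rw [hΦi, hmin, max_eq_right hlohi]
        rw [heq] at this
        linarith
    · exfalso
      have hxU := caseA i hgt
      have hΦeq : Φ x i = lo := by
        rcases max_cases lo (min (x i) hi') with ⟨he, -⟩ | ⟨he, -⟩
        · rw [hΦi]; exact he
        · exfalso
          have h1 : min (x i) hi' ≤ x i := min_le_left _ _
          have : Φ x i ≤ x i := by rw [hΦi, he]; exact h1
          linarith
      exact contraLo i (hlo1 i hi1) (fun α => (hq1 α i hi1).1)
        (by show U i < lo; rw [← hxU, ← hΦeq]; exact hgt)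
  · -- I2
    intro i hi2
    have hi1 : i ∉ I1 := fun h => (Set.eq_empty_iff_forall_notMem.1 h12 i) ⟨h, hi2⟩
    set lo := rlo i (deleteCoord i x) with hlo
    have hΦi : Φ x i = max lo (x i) := by
      simp only [hΦdef, clampMap, hi1, hi2, if_false, if_true, hlo]
    rcases eq_or_lt_of_le (le_max_right lo (x i)) with heq | hgt
    · rw [← heq] at hΦi
      have : lo ≤ x i := by
        have := le_max_left lo (x i); rw [← heq] at this; exact this
      exact this
    · exfalso
      have hgt' : x i < Φ x i := by rw [hΦi]; exact hgt
      have hxU := caseA i hgt'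
      have hΦeq : Φ x i = lo := by
        rw [hΦi]
        rcases max_cases lo (x i) with ⟨he, -⟩ | ⟨he, -⟩
        · exact he
        · exfalso; rw [he] at hgt; exact lt_irrefl _ hgt
      exact contraLo i (hlo2 i hi2) (fun α => hq2 α i hi2)
        (by show U i < lo; rw [← hxU, ← hΦeq]; exact hgt')
  · -- I3
    intro i hi3
    have hi1 : i ∉ I1 := fun h => (Set.eq_empty_iff_forall_notMem.1 h13 i) ⟨h, hi3⟩
    have hi2 : i ∉ I2 := fun h => (Set.eq_empty_iff_forall_notMem.1 h23 i) ⟨h, hi3⟩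
    set hi' := rhi i (deleteCoord i x) with hhi'
    have hΦi : Φ x i = min (x i) hi' := by
      simp only [hΦdef, clampMap, hi1, hi2, hi3, if_false, if_true, hhi']
    rcases eq_or_lt_of_le (min_le_left (x i) hi') with heq | hlt
    · have : x i ≤ hi' := by
        have := min_le_right (x i) hi'; rw [heq] at this; exact this
      exact this
    · exfalso
      have hlt' : Φ x i < x i := by rw [hΦi]; exact hlt
      have hxL := caseB i hlt'
      have hΦeq : Φ x i = hi' := by
        rw [hΦi]
        rcases min_cases (x i) hi' with ⟨he, -⟩ | ⟨he, -⟩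
        · exfalso; rw [he] at hlt; exact lt_irrefl _ hlt
        · exact he
      exact contraHi i (hhi3 i hi3) (fun α => hq3 α i hi3)
        (by show hi' < L i; rw [← hxL, ← hΦeq]; exact hlt')

/-- Two-sided/one-sided sandwich sets by `1`-Lipschitz bounds: if
`Q = Q¹ ∩ Q² ∩ Q³ ≠ ∅` with two-sided constraints on `I¹`, lower constraints on `I²` and
upper constraints on `I³` (pairwise disjoint), and `r̲ᵢ ≤ r̄ᵢ` on `I¹`, then `Q ⊆ l∞^{n+1}`
is injective. -/
theorem mixed_sandwich_injective {n : ℕ} (I1 I2 I3 : Set (Fin (n + 1)))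
    (h12 : I1 ∩ I2 = ∅) (h13 : I1 ∩ I3 = ∅) (h23 : I2 ∩ I3 = ∅)
    (rlo rhi : Fin (n + 1) → (Fin n → ℝ) → ℝ)
    (hlo1 : ∀ i ∈ I1, LipschitzWith 1 (rlo i)) (hhi1 : ∀ i ∈ I1, LipschitzWith 1 (rhi i))
    (hlo2 : ∀ i ∈ I2, LipschitzWith 1 (rlo i)) (hhi3 : ∀ i ∈ I3, LipschitzWith 1 (rhi i))
    (hle : ∀ i ∈ I1, ∀ y, rlo i y ≤ rhi i y)
    (Q1 Q2 Q3 Q : Set (Fin (n + 1) → ℝ))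
    (hQ1 : Q1 = {x | ∀ i ∈ I1, rlo i (deleteCoord i x) ≤ x i ∧ x i ≤ rhi i (deleteCoord i x)})
    (hQ2 : Q2 = {x | ∀ i ∈ I2, rlo i (deleteCoord i x) ≤ x i})
    (hQ3 : Q3 = {x | ∀ i ∈ I3, x i ≤ rhi i (deleteCoord i x)})
    (hQ : Q = Q1 ∩ Q2 ∩ Q3) (hne : Q.Nonempty) :
    IsInjectiveSubset Q := by
  obtain ⟨q0, hq0⟩ := hne
  refine injective_of_ball_property _ ⟨q0, hq0⟩ ?_
  intro ι p r hι compat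
  have hmem : ∀ α, (p α : Fin (n + 1) → ℝ) ∈ Q1 ∩ Q2 ∩ Q3 := fun α => by
    rw [← hQ]; exact (p α).2
  obtain ⟨x, hx1, hx2, hx3, hxd⟩ :=
    box_meets_Q I1 I2 I3 h12 h13 h23 rlo rhi hlo1 hhi1 hlo2 hhi3 hle ι hι
      (fun α => (p α : Fin (n + 1) → ℝ))
      (fun α i hi => by have h := (hmem α).1.1; rw [hQ1] at h; exact h i hi)
      (fun α i hi => by have h := (hmem α).1.2; rw [hQ2] at h; exact h i hi)
      (fun α i hi => by have h := (hmem α).2; rw [hQ3] at h; exact h i hi)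
      r (fun α β => by rw [← Subtype.dist_eq]; exact compat α β)
  refine ⟨⟨x, ?_⟩, fun α => by rw [Subtype.dist_eq]; exact hxd α⟩
  rw [hQ]
  exact ⟨⟨by rw [hQ1]; exact hx1, by rw [hQ2]; exact hx2⟩, by rw [hQ3]; exact hx3⟩
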